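/- arXiv:2504.16689 — 5 statements merged into one kernel-verified Lean document; each statement's English description precedes it below -/
import Mathlib

section
/- Let R be a ring equipped with a positive exhaustive filtration F_0 R ⊆ F_1 R ⊆ ⋯ with ∪_i F_i R = R and F_i R · F_j R ⊆ F_{i+j} R. If the associated graded ring gr_F R = ⊕_i F_i R / F_{i-1} R is left noetherian, then R is left noetherian. -/
/-!
STATEMENT 2: Let `R` be a ring with a positive exhaustive ring filtration
`F_0 R ⊆ F_1 R ⊆ ⋯` (`1 ∈ F_0 R`, `F_i R · F_j R ⊆ F_{i+j} R`, `∪ F_i R = R`).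
If the associated graded ring `gr_F R = ⊕_i F_i R / F_{i-1} R` is left
noetherian, then `R` is left noetherian.

The associated graded ring is encoded as a ring `S` together with an internal
grading `𝒜` and symbol maps `φ i : F_i R →+ S` landing in `𝒜 i`, with kernel
`F_{i-1} R`, multiplicative, and sending `1` to `1`.
-/

theorem noetherian_of_noetherian_graded
    (R : Type*) [Ring R]
    (F : ℕ → AddSubgroup R)
    (hmono : Monotone F)
    (hone : (1 : R) ∈ F 0)
    (hmul : ∀ i j : ℕ, ∀ x ∈ F i, ∀ y ∈ F j, x * y ∈ F (i + j))
    (hexh : ∀ r : R, ∃ i, r ∈ F i)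
    -- the associated graded ring
    (S : Type*) [Ring S]
    (𝒜 : ℕ → AddSubgroup S)
    (hinternal : DirectSum.IsInternal 𝒜)
    (φ : ∀ i : ℕ, F i →+ S)
    (hrange : ∀ i, (φ i).range = 𝒜 i)
    (hker0 : ∀ x : F 0, φ 0 x = 0 → x = 0)
    (hker : ∀ i : ℕ, ∀ x : F (i + 1), φ (i + 1) x = 0 ↔ (x : R) ∈ F i)
    (hφmul : ∀ (i j : ℕ) (x : F i) (y : F j),
      φ (i + j) ⟨(x : R) * (y : R), hmul i j x x.2 y y.2⟩ = φ i x * φ j y)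
    (hφone : φ 0 ⟨1, hone⟩ = 1)
    (hS : IsNoetherianRing S) :
    IsNoetherianRing R := by
  classical
  haveI dec : DirectSum.Decomposition 𝒜 := hinternal.chooseDecomposition
  have hmem𝒜 : ∀ (n : ℕ) (x : F n), φ n x ∈ 𝒜 n := fun n x => (hrange n) ▸ ⟨x, rfl⟩
  -- the symbol subgroup of an ideal in each degree
  let σI : Ideal R → ℕ → AddSubgroup S := fun I n =>
    AddSubgroup.map (φ n) (AddSubgroup.comap (F n).subtype I.toAddSubgroup)
  have hσImem : ∀ (I : Ideal R) (n : ℕ) (s : S),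
      s ∈ σI I n ↔ ∃ x : F n, (x : R) ∈ I ∧ φ n x = s := by
    intro I n s
    constructor
    · rintro ⟨x, hx, rfl⟩; exact ⟨x, hx, rfl⟩
    · rintro ⟨x, hx, rfl⟩; exact ⟨x, hx, rfl⟩
  have hσI𝒜 : ∀ (I : Ideal R) (n : ℕ) (s : S), s ∈ σI I n → s ∈ 𝒜 n := by
    rintro I n s ⟨x, _, rfl⟩; exact hmem𝒜 n x
  -- the predicate: all homogeneous components are symbols of elements of I
  let P : Ideal R → S → Prop := fun I a =>
    ∀ n, ((DirectSum.decompose 𝒜 a n : 𝒜 n) : S) ∈ σI I n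
  have hP0 : ∀ I : Ideal R, P I 0 := by
    intro I n
    rw [DirectSum.decompose_zero]
    simp only [DirectSum.zero_apply, ZeroMemClass.coe_zero]
    exact zero_mem _
  have hPadd : ∀ (I : Ideal R) (a b : S), P I a → P I b → P I (a + b) := by
    intro I a b ha hb n
    rw [DirectSum.decompose_add]
    simp only [DirectSum.add_apply, AddSubgroup.coe_add]
    exact add_mem (ha n) (hb n)
  have hPsum : ∀ (I : Ideal R) (t : Finset ℕ) (f : ℕ → S),
      (∀ i ∈ t, P I (f i)) → P I (∑ i ∈ t, f i) := by
    intro I t f h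
    refine Finset.sum_induction f (P I) (fun a b ha hb => hPadd I a b ha hb) (hP0 I) h
  have hPelem : ∀ (I : Ideal R) (m : ℕ) (w : S), w ∈ σI I m → P I w := by
    intro I m w hw n
    by_cases h : m = n
    · subst h
      rw [DirectSum.decompose_of_mem_same 𝒜 (hσI𝒜 I m w hw)]
      exact hw
    · rw [DirectSum.decompose_of_mem_ne 𝒜 (hσI𝒜 I m w hw) h]
      exact zero_mem _
  have hPmul : ∀ (I : Ideal R) (m : ℕ) (w : S), w ∈ σI I m → ∀ c : S, P I (c * w) := by
    intro I m w hw c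
    obtain ⟨x, hxI, rfl⟩ := (hσImem I m w).mp hw
    have hc : c = ∑ i ∈ (DirectSum.decompose 𝒜 c).support,
        ((DirectSum.decompose 𝒜 c i : 𝒜 i) : S) :=
      (DirectSum.sum_support_decompose 𝒜 c).symm
    rw [hc, Finset.sum_mul]
    refine hPsum I _ _ (fun i _ => ?_)
    -- each term is homogeneous of degree i * symbol
    have hlift : ∀ s : S, s ∈ 𝒜 i → ∃ r : F i, φ i r = s := by
      intro s hs
      rw [← hrange i] at hs
      exact hs
    obtain ⟨r, hr⟩ := hlift _ (SetLike.coe_mem (DirectSum.decompose 𝒜 c i))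
    have hprod : ((DirectSum.decompose 𝒜 c i : 𝒜 i) : S) * φ m x = φ (i + m)
        ⟨(r : R) * (x : R), hmul i m r r.2 x x.2⟩ := by
      rw [← hr]
      exact (hφmul i m r x).symm
    rw [hprod]
    refine hPelem I (i + m) _ ((hσImem I (i + m) _).mpr ?_)
    exact ⟨⟨(r : R) * (x : R), hmul i m r r.2 x x.2⟩, I.mul_mem_left (r : R) hxI, rfl⟩
  have hPspan : ∀ (I : Ideal R) (a : S),
      a ∈ Ideal.span (⋃ n, (σI I n : Set S)) → P I a := by
    intro I a ha
    refine Submodule.span_induction (p := fun x _ => P I x) ?_ (hP0 I)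
      (fun x y _ _ hx hy => hPadd I x y hx hy) ?_ ha
    · intro x hx
      obtain ⟨t, ⟨n, rfl⟩, hxt⟩ := hx
      exact hPelem I n x hxt
    · intro c a _ hPa
      have hasum : a = ∑ n ∈ (DirectSum.decompose 𝒜 a).support,
          ((DirectSum.decompose 𝒜 a n : 𝒜 n) : S) :=
        (DirectSum.sum_support_decompose 𝒜 a).symm
      have : c • a = ∑ n ∈ (DirectSum.decompose 𝒜 a).support,
          c * ((DirectSum.decompose 𝒜 a n : 𝒜 n) : S) := by
        rw [smul_eq_mul]
        conv_lhs => rw [hasum]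
        rw [Finset.mul_sum]
      rw [this]
      exact hPsum I _ _ (fun n _ => hPmul I n _ (hPa n) c)
  -- the key comparison lemma
  have key : ∀ I I' : Ideal R, I ≤ I' →
      Ideal.span (⋃ n, (σI I' n : Set S)) ≤ Ideal.span (⋃ n, (σI I n : Set S)) →
      I' ≤ I := by
    intro I I' hII' hG
    have main : ∀ n : ℕ, ∀ x : R, ∀ hxF : x ∈ F n, x ∈ I' → x ∈ I := by
      intro n
      induction n with
      | zero =>
        intro x hxF hxI'
        have hs : φ 0 ⟨x, hxF⟩ ∈ Ideal.span (⋃ n, (σI I n : Set S)) := by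
          refine hG (Ideal.subset_span ?_)
          exact Set.mem_iUnion.mpr ⟨0, (hσImem I' 0 _).mpr ⟨⟨x, hxF⟩, hxI', rfl⟩⟩
        have h0 := hPspan I _ hs 0
        rw [DirectSum.decompose_of_mem_same 𝒜 (hmem𝒜 0 ⟨x, hxF⟩)] at h0
        obtain ⟨z, hzI, hz⟩ := (hσImem I 0 _).mp h0
        have hzero : φ 0 (⟨x, hxF⟩ - z) = 0 := by rw [map_sub, hz, sub_self]
        have := hker0 _ hzero
        have hxz : (⟨x, hxF⟩ : F 0) = z := sub_eq_zero.mp this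
        have : x = (z : R) := congrArg Subtype.val hxz
        rw [this]; exact hzI
      | succ m ih =>
        intro x hxF hxI'
        have hs : φ (m + 1) ⟨x, hxF⟩ ∈ Ideal.span (⋃ n, (σI I n : Set S)) := by
          refine hG (Ideal.subset_span ?_)
          exact Set.mem_iUnion.mpr ⟨m + 1, (hσImem I' (m + 1) _).mpr ⟨⟨x, hxF⟩, hxI', rfl⟩⟩
        have h0 := hPspan I _ hs (m + 1)
        rw [DirectSum.decompose_of_mem_same 𝒜 (hmem𝒜 (m + 1) ⟨x, hxF⟩)] at h0
        obtain ⟨z, hzI, hz⟩ := (hσImem I (m + 1) _).mp h0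
        have hzero : φ (m + 1) (⟨x, hxF⟩ - z) = 0 := by rw [map_sub, hz, sub_self]
        have hsub : ((⟨x, hxF⟩ - z : F (m + 1)) : R) ∈ F m := (hker m _).mp hzero
        have hsub' : x - (z : R) ∈ F m := hsub
        have hsubI' : x - (z : R) ∈ I' := I'.sub_mem hxI' (hII' hzI)
        have hxzI : x - (z : R) ∈ I := ih (x - (z : R)) hsub' hsubI'
        have heq : x = (x - (z : R)) + (z : R) := by abel
        rw [heq]
        exact I.add_mem hxzI hzI
    intro x hx
    obtain ⟨n, hn⟩ := hexh x
    exact main n x hn hx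
  -- transfer well-foundedness
  rw [isNoetherianRing_iff, isNoetherian_iff']
  have hwfS : WellFounded ((· > ·) : Ideal S → Ideal S → Prop) :=
    (isNoetherian_iff'.mp hS).wf
  let G : Ideal R → Ideal S := fun I => Ideal.span (⋃ n, (σI I n : Set S))
  have hGmono : Monotone G := by
    intro I I' hII'
    refine Ideal.span_mono (Set.iUnion_mono fun n => ?_)
    exact AddSubgroup.map_mono (AddSubgroup.comap_mono fun a ha => hII' ha)
  constructor
  refine Subrelation.wf (r := InvImage (· > ·) G) ?_ (InvImage.wf G hwfS)
  intro I' I h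
  -- h : I' > I, i.e. I < I'
  have hle : G I ≤ G I' := hGmono h.le
  have hne : ¬ G I' ≤ G I := fun hc => absurd (key I I' h.le hc) (fun hc' => h.not_ge hc')
  exact lt_of_le_not_ge hle hne
end

section
/- Let R be a complete discrete valuation ring with uniformizer π, and let C• be a cochain complex of flat (equivalently, torsion-free) R-modules such that every cohomology group H^n(C•) is killed by some fixed power of π. Then for each n, the natural map H^n(C•) → H^n(Ĉ•) to the cohomology of the π-adic completion of the complex is an isomorphism. -/
/-!
STATEMENT 3: Let `𝒪` be a complete discrete valuation ring with uniformizer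
`π`, and let `C•` be a cochain complex of flat (π-torsion-free) `𝒪`-modules
whose cohomology groups are all killed by powers of `π`.  Then for each degree
the natural map `H^n(C•) → H^n(Ĉ•)` to the cohomology of the `π`-adic
completion of the complex is an isomorphism.  (With ℤ-indexing, every degree is
of the form `n + 1`; the isomorphism is expressed elementwise: the map on
cohomology at `n + 1` induced by `AdicCompletion.of` is surjective and
injective.)
-/

/-- Membership in `(span {π})^k • ⊤` is divisibility by `π ^ k`. -/
lemma aux_mem_span_pow_smul {R : Type*} [CommRing R] {N : Type*} [AddCommGroup N]
    [Module R N] (π : R) (k : ℕ) (x : N) :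
    x ∈ ((Ideal.span {π}) ^ k • ⊤ : Submodule R N) ↔ ∃ b : N, π ^ k • b = x := by
  rw [Ideal.span_singleton_pow]
  constructor
  · intro h
    refine Submodule.smul_induction_on h ?_ ?_
    · intro r hr y _
      obtain ⟨a, rfl⟩ := Ideal.mem_span_singleton'.mp hr
      exact ⟨a • y, by rw [smul_smul, mul_comm]⟩
    · rintro y z ⟨by', rfl⟩ ⟨bz, rfl⟩
      exact ⟨by' + bz, by rw [smul_add]⟩
  · rintro ⟨b, rfl⟩
    exact Submodule.smul_mem_smul (Ideal.mem_span_singleton_self _) Submodule.mem_top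

/-- Flat modules over a domain are torsion-free. -/
lemma aux_flat_torsion_free {R : Type*} [CommRing R] [IsDomain R] {N : Type*}
    [AddCommGroup N] [Module R N] [Module.Flat R N] {c : R} (hc : c ≠ 0) {x : N}
    (h : c • x = 0) : x = 0 := by
  have hinj : Function.Injective (LinearMap.rTensor N (LinearMap.lsmul R R c)) :=
    Module.Flat.rTensor_preserves_injective_linearMap _
      (fun a b hab => by
        simpa using mul_left_cancel₀ hc (by simpa [LinearMap.lsmul_apply] using hab))
  have h1 : (LinearMap.rTensor N (LinearMap.lsmul R R c)) ((TensorProduct.lid R N).symm x)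
      = 0 := by
    rw [TensorProduct.lid_symm_apply, LinearMap.rTensor_tmul]
    simp only [LinearMap.lsmul_apply, smul_eq_mul, mul_one]
    have h2 : (c ⊗ₜ[R] x : TensorProduct R R N) = (1 : R) ⊗ₜ[R] (c • x) := by
      rw [← TensorProduct.smul_tmul, smul_eq_mul, mul_one]
    rw [h2, h, TensorProduct.tmul_zero]
  have h3 : (TensorProduct.lid R N).symm x = 0 := hinj (by rw [h1, map_zero])
  exact (TensorProduct.lid R N).symm.injective (by rw [h3, map_zero])

theorem adic_completion_cohomology_of_bounded_torsion
    (𝒪 : Type*) [CommRing 𝒪] [IsDomain 𝒪] [IsDiscreteValuationRing 𝒪]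
    [IsAdicComplete (IsLocalRing.maximalIdeal 𝒪) 𝒪]
    (π : 𝒪) (hπ : Irreducible π)
    (M : ℤ → Type*) [∀ n, AddCommGroup (M n)] [∀ n, Module 𝒪 (M n)]
    [∀ n, Module.Flat 𝒪 (M n)]
    (d : ∀ n : ℤ, M n →ₗ[𝒪] M (n + 1))
    (hdd : ∀ n : ℤ, (d (n + 1)) ∘ₗ (d n) = 0)
    (htor : ∀ n : ℤ, ∃ m : ℕ, ∀ x : M (n + 1), d (n + 1) x = 0 →
      π ^ m • x ∈ LinearMap.range (d n))
    (n : ℤ) :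
    -- surjectivity of `H^{n+1}(C•) → H^{n+1}(Ĉ•)`
    (∀ y : AdicCompletion (Ideal.span {π}) (M (n + 1)),
      AdicCompletion.map (Ideal.span {π}) (d (n + 1)) y = 0 →
      ∃ x : M (n + 1), d (n + 1) x = 0 ∧
        ∃ z : AdicCompletion (Ideal.span {π}) (M n),
          y - AdicCompletion.of (Ideal.span {π}) (M (n + 1)) x =
            AdicCompletion.map (Ideal.span {π}) (d n) z) ∧
    -- injectivity of `H^{n+1}(C•) → H^{n+1}(Ĉ•)`
    (∀ x : M (n + 1), d (n + 1) x = 0 →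
      (∃ z : AdicCompletion (Ideal.span {π}) (M n),
        AdicCompletion.of (Ideal.span {π}) (M (n + 1)) x =
          AdicCompletion.map (Ideal.span {π}) (d n) z) →
      ∃ w : M n, d n w = x) := by
  classical
  have hπ0 : π ≠ 0 := hπ.ne_zero
  have tf : ∀ (k : ℤ) (j : ℕ) (x : M k), π ^ j • x = 0 → x = 0 := by
    intro k j x h
    exact aux_flat_torsion_free (pow_ne_zero j hπ0) h
  have hdd1 : ∀ x : M n, d (n + 1) (d n x) = 0 := by
    intro x
    have := LinearMap.ext_iff.mp (hdd n) x
    simpa using this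
  have hdd2 : ∀ x : M (n + 1), d (n + 1 + 1) (d (n + 1) x) = 0 := by
    intro x
    have := LinearMap.ext_iff.mp (hdd (n + 1)) x
    simpa using this
  obtain ⟨m, hm⟩ := htor n
  obtain ⟨m', hm'⟩ := htor (n + 1)
  constructor
  · -- surjectivity
    intro y hy
    obtain ⟨f, rfl⟩ := AdicCompletion.mk_surjective (Ideal.span {π}) (M (n + 1)) y
    have h0 : ∀ k : ℕ, ∃ c : M (n + 1 + 1), π ^ k • c = d (n + 1) (f k) := by
      intro k
      have h1 := congrFun (congrArg Subtype.val hy) k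
      rw [AdicCompletion.map_mk, AdicCompletion.mk_apply_coe] at h1
      rw [Submodule.mkQ_apply, show ((0 : AdicCompletion (Ideal.span {π}) (M (n+1+1))) : _).1 k = 0 from rfl,
        Submodule.Quotient.mk_eq_zero, aux_mem_span_pow_smul] at h1
      simpa using h1
    choose c hc using h0
    have hu0 : ∀ k : ℕ, ∃ u : M (n + 1), π ^ k • u = f (k + 1) - f k := by
      intro k
      have h2 := f.property (Nat.le_succ k)
      rw [SModEq.sub_mem, aux_mem_span_pow_smul] at h2
      obtain ⟨b, hb⟩ := h2
      exact ⟨-b, by rw [smul_neg, hb]; abel⟩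
    choose u hu using hu0
    -- step relation
    have hstep : ∀ k : ℕ, c k = π • c (k + 1) - d (n + 1) (u k) := by
      intro k
      have h2 : π ^ k • (π • c (k + 1)) = π ^ k • (c k + d (n + 1) (u k)) := by
        rw [smul_smul, ← pow_succ, hc (k + 1), smul_add, hc k, ← map_smul, hu k, ← map_add]
        congr 1
        abel
      have h3 : π ^ k • (π • c (k + 1) - (c k + d (n + 1) (u k))) = 0 := by
        rw [smul_sub, h2, sub_self]
      have h4 := tf (n + 1 + 1) k _ h3
      have h5 : π • c (k + 1) = c k + d (n + 1) (u k) := by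
        have := sub_eq_zero.mp h4
        linear_combination (norm := abel) this
      rw [h5]; abel
    -- c k is a cocycle
    have hcd : ∀ k : ℕ, d (n + 1 + 1) (c k) = 0 := by
      intro k
      refine tf (n + 1 + 1 + 1) k _ ?_
      rw [← map_smul, hc k, hdd2]
    -- c k is a coboundary
    have hce : ∀ k : ℕ, ∃ v : M (n + 1), d (n + 1) v = c k := by
      have iter : ∀ (j k : ℕ), ∃ w : M (n + 1),
          c k = π ^ j • c (k + j) + d (n + 1) w := by
        intro j
        induction j with
        | zero => exact fun k => ⟨0, by simp⟩
        | succ j ih =>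
          intro k
          obtain ⟨w, hw⟩ := ih k
          refine ⟨w - π ^ j • u (k + j), ?_⟩
          rw [map_sub, map_smul, hw, hstep (k + j)]
          rw [smul_sub, smul_smul, ← pow_succ]
          rw [show k + (j + 1) = k + j + 1 from rfl]
          abel
      intro k
      obtain ⟨w, hw⟩ := iter m' k
      obtain ⟨p, hp⟩ := hm' (c (k + m')) (hcd (k + m'))
      exact ⟨p + w, by rw [map_add, hp, hw]⟩
    choose v hv using hce
    set g : ℕ → M (n + 1) := fun k => f k - π ^ k • v k with hg
    have hge : ∀ k : ℕ, d (n + 1) (g k) = 0 := by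
      intro k
      rw [hg]
      simp only [map_sub, map_smul, hv k, hc k, sub_self]
    -- successive differences of g
    have ht0 : ∀ k : ℕ, π ^ k • (u k + v k - π • v (k + 1)) = g (k + 1) - g k := by
      intro k
      rw [hg]
      simp only [smul_sub, smul_add, hu k, smul_smul, ← pow_succ]
      abel
    have htd : ∀ k : ℕ, d (n + 1) (u k + v k - π • v (k + 1)) = 0 := by
      intro k
      refine tf (n + 1 + 1) k _ ?_
      rw [← map_smul, ht0 k, map_sub, hge, hge, sub_self]
    have hs0 : ∀ k : ℕ, ∃ s : M n, d n s = π ^ m • (u k + v k - π • v (k + 1)) :=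
      fun k => hm _ (htd k)
    choose s hs using hs0
    set a : ℕ → M n := fun k => ∑ i ∈ Finset.range k, π ^ i • s (i + m) with ha
    have hda : ∀ k : ℕ, d n (a k) = g (k + m) - g m := by
      intro k
      rw [ha]
      simp only [map_sum, map_smul, hs]
      have hterm : ∀ i : ℕ, π ^ i • π ^ m • (u (i + m) + v (i + m) - π • v (i + m + 1)) =
          g (i + 1 + m) - g (i + m) := by
        intro i
        rw [smul_smul, ← pow_add, ht0 (i + m), show i + m + 1 = i + 1 + m from by omega]
      calc ∑ i ∈ Finset.range k, π ^ i • π ^ m • (u (i + m) + v (i + m) - π • v (i + m + 1))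
          = ∑ i ∈ Finset.range k, ((fun i => g (i + m)) (i + 1) - (fun i => g (i + m)) i) := by
            refine Finset.sum_congr rfl fun i _ => ?_
            simpa using hterm i
        _ = g (k + m) - g m := by
            rw [Finset.sum_range_sub (fun i => g (i + m)) k]
            simp
    have hacau : ∀ k : ℕ, a k ≡ a (k + 1)
        [SMOD ((Ideal.span {π}) ^ k • ⊤ : Submodule 𝒪 (M n))] := by
      intro k
      rw [SModEq.sub_mem, aux_mem_span_pow_smul]
      refine ⟨-s (k + m), ?_⟩
      rw [ha]
      simp [Finset.sum_range_succ]
    set A : AdicCompletion.AdicCauchySequence (Ideal.span {π}) (M n) :=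
      AdicCompletion.AdicCauchySequence.mk (Ideal.span {π}) (M n) a hacau with hA
    refine ⟨g m, hge m, AdicCompletion.mk (Ideal.span {π}) (M n) A, ?_⟩
    ext k
    rw [AdicCompletion.val_sub_apply, AdicCompletion.mk_apply_coe, AdicCompletion.map_mk,
      AdicCompletion.mk_apply_coe]
    rw [show (AdicCompletion.of (Ideal.span {π}) (M (n + 1)) (g m)).1 k =
      Submodule.mkQ _ (g m) from rfl]
    rw [← map_sub, Submodule.mkQ_apply, Submodule.mkQ_apply, Submodule.Quotient.eq]
    rw [show (AdicCompletion.AdicCauchySequence.map (Ideal.span {π}) (d n) A) k =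
      d n (a k) from rfl, hda k]
    have hmem1 : f k - f (k + m) ∈ ((Ideal.span {π}) ^ k • ⊤ : Submodule 𝒪 (M (n + 1))) := by
      have := f.property (Nat.le_add_right k m)
      rwa [SModEq.sub_mem] at this
    have hmem2 : π ^ (k + m) • v (k + m) ∈
        ((Ideal.span {π}) ^ k • ⊤ : Submodule 𝒪 (M (n + 1))) := by
      rw [aux_mem_span_pow_smul]
      exact ⟨π ^ m • v (k + m), by rw [smul_smul, ← pow_add]⟩
    have : f k - g m - (g (k + m) - g m) = (f k - f (k + m)) + π ^ (k + m) • v (k + m) := by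
      rw [hg]; dsimp only; abel
    rw [this]
    exact Submodule.add_mem _ hmem1 hmem2
  · -- injectivity
    rintro x hx ⟨z, hz⟩
    obtain ⟨f, rfl⟩ := AdicCompletion.mk_surjective (Ideal.span {π}) (M n) z
    have h1 : x - d n (f (m + 1)) ∈
        ((Ideal.span {π}) ^ (m + 1) • ⊤ : Submodule 𝒪 (M (n + 1))) := by
      have h2 := congrFun (congrArg Subtype.val hz) (m + 1)
      rw [AdicCompletion.map_mk, AdicCompletion.mk_apply_coe] at h2
      rw [show (AdicCompletion.of (Ideal.span {π}) (M (n + 1)) x).1 (m + 1) =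
        Submodule.mkQ _ x from rfl] at h2
      rw [show (AdicCompletion.AdicCauchySequence.map (Ideal.span {π}) (d n) f) (m + 1) =
        d n (f (m + 1)) from rfl] at h2
      rw [Submodule.mkQ_apply, Submodule.mkQ_apply, Submodule.Quotient.eq] at h2
      exact h2
    rw [aux_mem_span_pow_smul] at h1
    obtain ⟨b, hb⟩ := h1
    have hbe : d (n + 1) b = 0 := by
      refine tf (n + 1 + 1) (m + 1) _ ?_
      rw [← map_smul, hb, map_sub, hx, hdd1]; simp
    obtain ⟨w, hw⟩ := hm b hbe
    refine ⟨f (m + 1) + π • w, ?_⟩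
    rw [map_add, map_smul, hw, smul_smul, ← pow_succ', hb]
    abel
end

section
/- Let R be a deformable algebra over a complete discrete valuation ring with uniformizer π, with filtration F• R, and let R_1 = Σ_{i≥0} π^i F_i R be its first deformation. Then for every n ≥ 0 one has R_1 ∩ π^n R = Σ_{i≥n} π^i F_i R. -/
/-!
STATEMENT 5: Let `𝒪` be a complete discrete valuation ring with uniformizer `π`
and `R` a deformable `𝒪`-algebra with positive exhaustive filtration `F• R`
whose associated graded is `π`-torsion-free.  Let `R₁ = Σ_{i≥0} π^i F_i R` be
the first deformation.  Then for every `n ≥ 0`,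
`R₁ ∩ π^n R = Σ_{i≥n} π^i F_i R`.
-/

private lemma iSup_shift_aux {α : Type*} [CompleteLattice α] (f : ℕ → α) (m : ℕ) :
    (⨆ i, f (m + i)) = f m ⊔ ⨆ i, f (m + 1 + i) := by
  apply le_antisymm
  · apply iSup_le; intro i
    cases i with
    | zero => exact le_sup_left
    | succ i =>
      refine le_sup_of_le_right (le_iSup_of_le i ?_)
      rw [show m + (i + 1) = m + 1 + i by omega]
  · apply sup_le
    · exact le_iSup_of_le 0 le_rfl
    · apply iSup_le; intro i
      refine le_iSup_of_le (i + 1) ?_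
      rw [show m + 1 + i = m + (i + 1) by omega]

theorem first_deformation_cap_pi_power
    (𝒪 : Type*) [CommRing 𝒪] [IsDomain 𝒪] [IsDiscreteValuationRing 𝒪]
    [IsAdicComplete (IsLocalRing.maximalIdeal 𝒪) 𝒪]
    (π : 𝒪) (hπ : Irreducible π)
    (R : Type*) [Ring R] [Algebra 𝒪 R]
    (F : ℕ → Submodule 𝒪 R)
    (hmono : Monotone F)
    (hone : (1 : R) ∈ F 0)
    (hmul : ∀ i j : ℕ, ∀ x ∈ F i, ∀ y ∈ F j, x * y ∈ F (i + j))
    (hexh : ∀ r : R, ∃ i, r ∈ F i)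
    (hgrflat : ∀ i : ℕ, ∀ x ∈ F (i + 1), π • x ∈ F i → x ∈ F i)
    (n : ℕ) :
    ((⨆ i : ℕ, Submodule.map ((π ^ i) • (LinearMap.id : R →ₗ[𝒪] R)) (F i)) ⊓
        Submodule.map ((π ^ n) • (LinearMap.id : R →ₗ[𝒪] R)) (⊤ : Submodule 𝒪 R)) =
      ⨆ i : ℕ, Submodule.map ((π ^ (n + i)) • (LinearMap.id : R →ₗ[𝒪] R)) (F (n + i)) := by
  -- descent lemma from torsion-freeness of the associated graded
  have descend : ∀ m k : ℕ, ∀ y : R, y ∈ F m → π • y ∈ F k → y ∈ F k := by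
    intro m
    induction m with
    | zero => intro k y hy _; exact hmono (Nat.zero_le k) hy
    | succ m ih =>
      intro k y hy hπy
      rcases le_or_gt (m + 1) k with h | h
      · exact hmono h hy
      · have hk : k ≤ m := Nat.lt_succ_iff.mp h
        exact ih k y (hgrflat m y hy (hmono hk hπy)) hπy
  have powdescend : ∀ j m k : ℕ, ∀ y : R, y ∈ F m → (π ^ (j + 1)) • y ∈ F k → y ∈ F k := by
    intro j
    induction j with
    | zero =>
      intro m k y hy h
      rw [pow_one] at h
      exact descend m k y hy h
    | succ j ih =>
      intro m k y hy h
      have h1 : (π ^ (j + 1)) • (π • y) ∈ F k := by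
        rw [smul_smul, ← pow_succ]
        exact h
      exact descend m k y hy (ih m k (π • y) (Submodule.smul_mem _ _ hy) h1)
  induction n with
  | zero =>
    simp [Nat.zero_add, Submodule.map_id]
  | succ n ih =>
    have hPmono : Submodule.map ((π ^ (n + 1)) • (LinearMap.id : R →ₗ[𝒪] R)) (⊤ : Submodule 𝒪 R)
        ≤ Submodule.map ((π ^ n) • (LinearMap.id : R →ₗ[𝒪] R)) (⊤ : Submodule 𝒪 R) := by
      rintro x ⟨y, -, rfl⟩
      refine ⟨π • y, Submodule.mem_top, ?_⟩
      simp only [LinearMap.smul_apply, LinearMap.id_apply, smul_smul, ← pow_succ]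
    have hTP : (⨆ i : ℕ, Submodule.map ((π ^ (n + 1 + i)) • (LinearMap.id : R →ₗ[𝒪] R))
          (F (n + 1 + i)))
        ≤ Submodule.map ((π ^ (n + 1)) • (LinearMap.id : R →ₗ[𝒪] R)) (⊤ : Submodule 𝒪 R) := by
      apply iSup_le; intro i
      rintro x ⟨y, -, rfl⟩
      refine ⟨(π ^ i) • y, Submodule.mem_top, ?_⟩
      simp only [LinearMap.smul_apply, LinearMap.id_apply, smul_smul, ← pow_add]
    have hstep : ((⨆ i : ℕ, Submodule.map ((π ^ i) • (LinearMap.id : R →ₗ[𝒪] R)) (F i)) ⊓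
          Submodule.map ((π ^ (n + 1)) • (LinearMap.id : R →ₗ[𝒪] R)) (⊤ : Submodule 𝒪 R))
        = (((⨆ i : ℕ, Submodule.map ((π ^ i) • (LinearMap.id : R →ₗ[𝒪] R)) (F i)) ⊓
            Submodule.map ((π ^ n) • (LinearMap.id : R →ₗ[𝒪] R)) (⊤ : Submodule 𝒪 R)) ⊓
          Submodule.map ((π ^ (n + 1)) • (LinearMap.id : R →ₗ[𝒪] R)) (⊤ : Submodule 𝒪 R)) := by
      rw [inf_assoc, inf_eq_right.mpr hPmono]
    rw [hstep, ih, iSup_shift_aux (fun i => Submodule.map ((π ^ i) • (LinearMap.id : R →ₗ[𝒪] R)) (F i)) n]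
    apply le_antisymm
    · rintro x ⟨hx1, hx2⟩
      rw [SetLike.mem_coe, Submodule.mem_sup] at hx1
      obtain ⟨a, ha, b, hb, rfl⟩ := hx1
      have hbP : b ∈ Submodule.map ((π ^ (n + 1)) • (LinearMap.id : R →ₗ[𝒪] R))
          (⊤ : Submodule 𝒪 R) := hTP hb
      have haP : a ∈ Submodule.map ((π ^ (n + 1)) • (LinearMap.id : R →ₗ[𝒪] R))
          (⊤ : Submodule 𝒪 R) := by
        have : a = (a + b) - b := by abel
        rw [this]
        exact Submodule.sub_mem _ hx2 hbP
      obtain ⟨c, hc, hac⟩ := ha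
      obtain ⟨y, -, hay⟩ := haP
      simp only [LinearMap.smul_apply, LinearMap.id_apply] at hac hay
      -- π^(n+1) • y = π^n • c ∈ F n, hence y ∈ F n ⊆ F (n+1)
      obtain ⟨m, hm⟩ := hexh y
      have hyFn : y ∈ F n := by
        apply powdescend n m n y hm
        rw [hay, ← hac]
        exact Submodule.smul_mem _ _ hc
      have haT : a ∈ ⨆ i : ℕ, Submodule.map ((π ^ (n + 1 + i)) • (LinearMap.id : R →ₗ[𝒪] R))
          (F (n + 1 + i)) := by
        apply Submodule.mem_iSup_of_mem 0
        exact ⟨y, hmono (Nat.le_succ n) hyFn, by simpa using hay⟩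
      exact Submodule.add_mem _ haT hb
    · exact le_inf le_sup_right hTP
end

section
/- Let R be a filtered ring with positive exhaustive filtration F•R, and let v₁, …, v_r ∈ F₁R be elements whose principal symbols in gr_F R, together with gr₀ = F₀R, generate gr_F R, and such that the ordered monomials v₁^{α₁}⋯v_r^{α_r} have symbols forming a basis of gr_F R as a graded free F₀R-module. Then the ordered monomials v₁^{α₁}⋯v_r^{α_r}, (α₁,…,α_r) ∈ ℕ^r, form a basis of R as a left F₀R-module. -/
/-!
STATEMENT 17: Let `R` be a ring with a positive exhaustive filtration `F• R`
and `v₁, …, v_r ∈ F₁ R` elements such that the associated graded ring `gr_F R`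
is a free left `F₀ R`-module with basis the principal symbols of the ordered
monomials `v₁^{α₁} ⋯ v_r^{α_r}` (the symbol of `v_i` in degree 1).  Then the
ordered monomials `v₁^{α₁} ⋯ v_r^{α_r}`, `(α₁,…,α_r) ∈ ℕ^r`, form a basis of
`R` as a left `F₀ R`-module.

The graded freeness is encoded degreewise: every `x ∈ F_{d+1} R` is congruent
modulo `F_d R` to an `F₀R`-combination of monomials of total degree `d+1`
(existence), and such a combination lies in `F_d R` only if all its
coefficients vanish (independence).
-/

theorem pbw_basis_from_graded_basis
    (R : Type*) [Ring R]
    (F : ℕ → AddSubgroup R)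
    (hmono : Monotone F)
    (hone : (1 : R) ∈ F 0)
    (hmul : ∀ i j : ℕ, ∀ x ∈ F i, ∀ y ∈ F j, x * y ∈ F (i + j))
    (hexh : ∀ x : R, ∃ i, x ∈ F i)
    (r : ℕ) (v : Fin r → R) (hv : ∀ i, v i ∈ F 1)
    (mono : (Fin r → ℕ) → R)
    (hmonodef : ∀ α : Fin r → ℕ,
      mono α = ((List.finRange r).map (fun i => v i ^ α i)).prod)
    -- existence of symbol expansions in each degree
    (hexist : ∀ (d : ℕ) (x : R), x ∈ F (d + 1) →
      ∃ c : (Fin r → ℕ) →₀ R,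
        (∀ α, c α ∈ F 0) ∧
        (∀ α ∈ c.support, (∑ i, α i) = d + 1) ∧
        x - c.sum (fun α a => a * mono α) ∈ F d)
    -- independence of the symbols in each degree
    (hindep : ∀ (d : ℕ) (c : (Fin r → ℕ) →₀ R),
      (∀ α, c α ∈ F 0) →
      (∀ α ∈ c.support, (∑ i, α i) = d + 1) →
      c.sum (fun α a => a * mono α) ∈ F d → c = 0) :
    (∀ x : R, ∃ c : (Fin r → ℕ) →₀ R,
      (∀ α, c α ∈ F 0) ∧ x = c.sum (fun α a => a * mono α)) ∧
    (∀ c c' : (Fin r → ℕ) →₀ R,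
      (∀ α, c α ∈ F 0) → (∀ α, c' α ∈ F 0) →
      c.sum (fun α a => a * mono α) = c'.sum (fun α a => a * mono α) →
      c = c') := by

  classical
  -- powers of v lie in the filtration
  have hpow : ∀ (i : Fin r) (k : ℕ), v i ^ k ∈ F k := by
    intro i k
    induction k with
    | zero => simpa using hone
    | succ k ih =>
      have := hmul k 1 _ ih _ (hv i)
      simpa [pow_succ] using this
  -- monomials lie in the filtration
  have hmonomem : ∀ α : Fin r → ℕ, mono α ∈ F (∑ i, α i) := by
    intro α
    rw [hmonodef, Fin.sum_univ_def]
    have : ∀ l : List (Fin r),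
        (l.map fun i => v i ^ α i).prod ∈ F (l.map fun i => α i).sum := by
      intro l
      induction l with
      | nil => simpa using hone
      | cons a l ih =>
        simpa using hmul (α a) _ _ (hpow a (α a)) _ ih
    exact this _
  have h0m : ∀ α : Fin r → ℕ, (0 : R) * mono α = 0 := fun α => zero_mul _
  -- key independence lemma: a combination summing to zero is zero
  have key : ∀ (d : ℕ) (c : (Fin r → ℕ) →₀ R), (∀ α, c α ∈ F 0) →
      (∀ α ∈ c.support, (∑ i, α i) ≤ d) →
      c.sum (fun α a => a * mono α) = 0 → c = 0 := by
    intro d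
    induction d with
    | zero =>
      intro c hc hsupp hsum
      -- every support element has total degree 0
      have hsum1 : c.sum (fun α a => a * mono α) ∈ F 0 := by
        rw [hsum]; exact (F 0).zero_mem
      -- use hindep at degree... hindep needs exact degree d+1; do base by hand
      ext α
      by_contra hne
      have hαs : α ∈ c.support := Finsupp.mem_support_iff.mpr (by simpa using hne)
      have hα0 : (∑ i, α i) = 0 := Nat.le_zero.mp (hsupp α hαs)
      -- so α = 0 and support ⊆ {0}
      have hsub : c.support ⊆ {α} := by
        intro β hβ
        have hβ0 : (∑ i, β i) = 0 := Nat.le_zero.mp (hsupp β hβ)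
        have : β = α := by
          funext i
          have h1 : β i = 0 := by
            have := Finset.sum_eq_zero_iff.mp hβ0 i (Finset.mem_univ i)
            exact this
          have h2 : α i = 0 := Finset.sum_eq_zero_iff.mp hα0 i (Finset.mem_univ i)
          rw [h1, h2]
        simpa [this]
      have hm1 : mono α = 1 := by
        have : ∀ i, α i = 0 := fun i =>
          Finset.sum_eq_zero_iff.mp hα0 i (Finset.mem_univ i)
        simp [hmonodef, this]
      have : c.sum (fun α a => a * mono α) = c α := by
        rw [Finsupp.sum]
        rw [Finset.sum_subset hsub]
        · simp [hm1]
        · intro β _ hβ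
          simp [Finsupp.notMem_support_iff.mp hβ]
      rw [this] at hsum
      exact hne (by simpa using hsum)
    | succ d ih =>
      intro c hc hsupp hsum
      set p : (Fin r → ℕ) → Prop := fun α => (∑ i, α i) = d + 1 with hp
      set ct := c.filter p with hct
      set cl := c.filter (fun α => ¬ p α) with hcl
      have hdecomp : ct + cl = c := Finsupp.filter_pos_add_filter_neg c p
      have hctc : ∀ α, ct α ∈ F 0 := by
        intro α
        rw [hct, Finsupp.filter_apply]
        split <;> [exact hc α; exact (F 0).zero_mem]
      have hclc : ∀ α, cl α ∈ F 0 := by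
        intro α
        rw [hcl, Finsupp.filter_apply]
        split <;> [exact hc α; exact (F 0).zero_mem]
      have hsumsplit : ct.sum (fun α a => a * mono α) + cl.sum (fun α a => a * mono α)
          = c.sum (fun α a => a * mono α) := by
        rw [← hdecomp]
        exact (Finsupp.sum_add_index' h0m (fun α b1 b2 => add_mul b1 b2 (mono α))).symm
      have hclF : cl.sum (fun α a => a * mono α) ∈ F d := by
        apply AddSubgroup.sum_mem
        intro α hα
        have hα' : α ∈ c.support ∧ ¬ p α := by
          have h2 := hα
          rw [hcl, Finsupp.support_filter, Finset.mem_filter] at h2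
          exact h2
        have hle : (∑ i, α i) ≤ d := by
          have h1 := hsupp α hα'.1
          have h2 := hα'.2
          omega
        have hmem1 : cl α * mono α ∈ F (0 + (∑ i, α i)) :=
          hmul 0 _ _ (hclc α) _ (hmonomem α)
        have hmem2 : cl α * mono α ∈ F (∑ i, α i) := by simpa using hmem1
        exact hmono hle hmem2
      have hctF : ct.sum (fun α a => a * mono α) ∈ F d := by
        have heq : ct.sum (fun α a => a * mono α) = - cl.sum (fun α a => a * mono α) := by
          have h := hsumsplit
          rw [hsum] at h
          exact eq_neg_of_add_eq_zero_left h
        rw [heq]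
        exact (F d).neg_mem hclF
      have hctsupp : ∀ α ∈ ct.support, (∑ i, α i) = d + 1 := by
        intro α hα
        rw [hct, Finsupp.support_filter, Finset.mem_filter] at hα
        exact hα.2
      have hct0 : ct = 0 := hindep d ct hctc hctsupp hctF
      have hceq : c = cl := by rw [← hdecomp, hct0, zero_add]
      have hclsupp : ∀ α ∈ cl.support, (∑ i, α i) ≤ d := by
        intro α hα
        have hmem : α ∈ c.support := by
          rw [hceq]; exact hα
        have h1 := hsupp α hmem
        have h2 : ¬ p α := by
          rw [hcl, Finsupp.support_filter, Finset.mem_filter] at hα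
          exact hα.2
        rw [hp] at h2
        simp only at h2
        omega
      have hclsum : cl.sum (fun α a => a * mono α) = 0 := by
        rw [← hceq]; exact hsum
      have : cl = 0 := ih cl hclc hclsupp hclsum
      rw [hceq, this]
  constructor
  · -- existence
    have hex : ∀ (d : ℕ) (x : R), x ∈ F d → ∃ c : (Fin r → ℕ) →₀ R,
        (∀ α, c α ∈ F 0) ∧ x = c.sum (fun α a => a * mono α) := by
      intro d
      induction d with
      | zero =>
        intro x hx
        refine ⟨Finsupp.single 0 x, ?_, ?_⟩
        · intro α
          rw [Finsupp.single_apply]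
          split <;> [exact hx; exact (F 0).zero_mem]
        · rw [Finsupp.sum_single_index (h0m 0)]
          have : mono 0 = 1 := by simp [hmonodef]
          simp [this]
      | succ d ih =>
        intro x hx
        obtain ⟨c, hc0, _, hrest⟩ := hexist d x hx
        obtain ⟨c', hc'0, hc'eq⟩ := ih _ hrest
        refine ⟨c + c', fun α => (F 0).add_mem (hc0 α) (hc'0 α), ?_⟩
        rw [Finsupp.sum_add_index' h0m (fun α b1 b2 => add_mul b1 b2 (mono α)), ← hc'eq]
        abel
    intro x
    obtain ⟨d, hd⟩ := hexh x
    exact hex d x hd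
  · -- uniqueness
    intro c c' hc hc' heq
    have hsub : (c - c').sum (fun α a => a * mono α) = 0 := by
      rw [Finsupp.sum_sub_index (fun α b1 b2 => sub_mul b1 b2 (mono α)), heq, sub_self]
    have hcoef : ∀ α, (c - c') α ∈ F 0 := by
      intro α
      rw [Finsupp.sub_apply]
      exact (F 0).sub_mem (hc α) (hc' α)
    have := key ((c - c').support.sup (fun α => ∑ i, α i)) (c - c') hcoef
      (fun α hα => Finset.le_sup hα) hsub
    exact sub_eq_zero.mp this
end

section
/- Let R → S be a ring homomorphism and suppose there is an exhaustive positive filtration on R and on S compatible with the map, such that F₀R → F₀S is flat and gr_F R is a free F₀R-module with gr_F S ≅ F₀S ⊗_{F₀R} gr_F R as graded F₀S-modules via the induced map. Then S ≅ F₀S ⊗_{F₀R} R as filtered left F₀S-modules; in particular if F₀R → F₀S is (faithfully) flat then R → S is (faithfully) flat as a map of left F₀R-modules. -/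
/-!
STATEMENT 18: Let `φ : R → S` be a homomorphism of filtered rings (positive
exhaustive filtrations, compatible with `φ`) such that `F₀R → F₀S` is flat,
`gr_F R` is a free `F₀R`-module, and `gr_F S ≅ F₀S ⊗_{F₀R} gr_F R` as graded
`F₀S`-modules via the induced map.  Then `S ≅ F₀S ⊗_{F₀R} R` as filtered left
`F₀S`-modules; in particular if `F₀R → F₀S` is (faithfully) flat then `R → S`
is (faithfully) flat as a map of left `F₀R`-modules.

The degree-zero parts are presented as rings `R₀, S₀` with injective ring
homomorphisms onto `F₀R, F₀S`; the graded freeness hypotheses and the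
base-change hypothesis on associated graded pieces are encoded degreewise via
a graded basis `e : ι → R` (with degrees `dg`) of `gr_F R` and the basis
`φ ∘ e` of `gr_F S`.  The conclusion `S ≅ F₀S ⊗_{F₀R} R` is expressed by the
statement that `S` is a free left `F₀S`-module on `(φ (e k))_k`, compatibly
with the filtrations; flatness of modules over the (possibly noncommutative)
ring `R₀` is expressed by the equational criterion, and faithful flatness by
the maximal-left-ideal criterion.
-/

theorem filtered_base_change_of_graded_base_change
    (R S : Type*) [Ring R] [Ring S] (φ : R →+* S)
    (FR : ℕ → AddSubgroup R) (FS : ℕ → AddSubgroup S)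
    (hRmono : Monotone FR) (hRone : (1 : R) ∈ FR 0)
    (hRmul : ∀ i j : ℕ, ∀ x ∈ FR i, ∀ y ∈ FR j, x * y ∈ FR (i + j))
    (hRexh : ∀ x : R, ∃ i, x ∈ FR i)
    (hSmono : Monotone FS) (hSone : (1 : S) ∈ FS 0)
    (hSmul : ∀ i j : ℕ, ∀ x ∈ FS i, ∀ y ∈ FS j, x * y ∈ FS (i + j))
    (hSexh : ∀ y : S, ∃ i, y ∈ FS i)
    (hφ : ∀ i : ℕ, ∀ x ∈ FR i, φ x ∈ FS i)
    -- the degree-zero subrings `F₀R` and `F₀S`, presented as rings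
    (R₀ S₀ : Type*) [Ring R₀] [Ring S₀]
    (ιR : R₀ →+* R) (ιS : S₀ →+* S)
    (hιR : Function.Injective ιR) (hιS : Function.Injective ιS)
    (hιRrange : ∀ x : R, x ∈ FR 0 ↔ ∃ a : R₀, ιR a = x)
    (hιSrange : ∀ y : S, y ∈ FS 0 ↔ ∃ a : S₀, ιS a = y)
    (f₀ : R₀ →+* S₀) (hf₀ : ∀ a : R₀, φ (ιR a) = ιS (f₀ a))
    -- a graded basis of `gr_F R` over `F₀R`
    (ι : Type*) (e : ι → R) (dg : ι → ℕ) (he : ∀ k, e k ∈ FR (dg k))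
    (hexR0 : ∀ x ∈ FR 0, ∃ c : ι →₀ R₀,
      (∀ k ∈ c.support, dg k = 0) ∧ x = c.sum (fun k a => ιR a * e k))
    (hexR : ∀ d : ℕ, ∀ x ∈ FR (d + 1), ∃ c : ι →₀ R₀,
      (∀ k ∈ c.support, dg k = d + 1) ∧
      x - c.sum (fun k a => ιR a * e k) ∈ FR d)
    (hindR0 : ∀ c : ι →₀ R₀, (∀ k ∈ c.support, dg k = 0) →
      c.sum (fun k a => ιR a * e k) = 0 → c = 0)
    (hindR : ∀ d : ℕ, ∀ c : ι →₀ R₀, (∀ k ∈ c.support, dg k = d + 1) →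
      c.sum (fun k a => ιR a * e k) ∈ FR d → c = 0)
    -- `gr_F S ≅ F₀S ⊗_{F₀R} gr_F R`: the symbols of `φ ∘ e` form a graded
    -- basis of `gr_F S` over `F₀S`
    (hexS0 : ∀ y ∈ FS 0, ∃ c : ι →₀ S₀,
      (∀ k ∈ c.support, dg k = 0) ∧ y = c.sum (fun k a => ιS a * φ (e k)))
    (hexS : ∀ d : ℕ, ∀ y ∈ FS (d + 1), ∃ c : ι →₀ S₀,
      (∀ k ∈ c.support, dg k = d + 1) ∧
      y - c.sum (fun k a => ιS a * φ (e k)) ∈ FS d)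
    (hindS0 : ∀ c : ι →₀ S₀, (∀ k ∈ c.support, dg k = 0) →
      c.sum (fun k a => ιS a * φ (e k)) = 0 → c = 0)
    (hindS : ∀ d : ℕ, ∀ c : ι →₀ S₀, (∀ k ∈ c.support, dg k = d + 1) →
      c.sum (fun k a => ιS a * φ (e k)) ∈ FS d → c = 0) :
    -- (1) `S ≅ F₀S ⊗_{F₀R} R` as filtered left `F₀S`-modules: `S` is a free
    -- left `F₀S`-module on `(φ (e k))_k`, compatibly with the filtrations
    ((∀ y : S, ∃ c : ι →₀ S₀, y = c.sum (fun k a => ιS a * φ (e k))) ∧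
      (∀ c c' : ι →₀ S₀,
        c.sum (fun k a => ιS a * φ (e k)) = c'.sum (fun k a => ιS a * φ (e k)) →
        c = c') ∧
      (∀ i : ℕ, ∀ y ∈ FS i, ∃ c : ι →₀ S₀,
        (∀ k ∈ c.support, dg k ≤ i) ∧ y = c.sum (fun k a => ιS a * φ (e k)))) ∧
    -- (2) if `F₀R → F₀S` is flat then `R → S` is flat as a map of left
    -- `F₀R`-modules (equational criterion for `S` as a left `R₀`-module)
    ((∀ (n : ℕ) (a : Fin n → R₀) (x : Fin n → S₀),
        (∑ i, f₀ (a i) * x i) = 0 →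
        ∃ (m : ℕ) (b : Fin n → Fin m → R₀) (y : Fin m → S₀),
          (∀ i, x i = ∑ j, f₀ (b i j) * y j) ∧
          (∀ j, (∑ i, a i * b i j) = 0)) →
      (∀ (n : ℕ) (a : Fin n → R₀) (x : Fin n → S),
        (∑ i, ιS (f₀ (a i)) * x i) = 0 →
        ∃ (m : ℕ) (b : Fin n → Fin m → R₀) (y : Fin m → S),
          (∀ i, x i = ∑ j, ιS (f₀ (b i j)) * y j) ∧
          (∀ j, (∑ i, a i * b i j) = 0))) ∧
    -- (3) if `F₀R → F₀S` is moreover faithfully flat, so is `R → S` as a map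
    -- of left `F₀R`-modules
    (((∀ (n : ℕ) (a : Fin n → R₀) (x : Fin n → S₀),
        (∑ i, f₀ (a i) * x i) = 0 →
        ∃ (m : ℕ) (b : Fin n → Fin m → R₀) (y : Fin m → S₀),
          (∀ i, x i = ∑ j, f₀ (b i j) * y j) ∧
          (∀ j, (∑ i, a i * b i j) = 0)) ∧
      (∀ I : Ideal R₀, I.IsMaximal →
        ∃ s : S₀, s ∉ AddSubgroup.closure
          {z : S₀ | ∃ a ∈ I, ∃ w : S₀, z = f₀ a * w})) →
      (∀ I : Ideal R₀, I.IsMaximal →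
        ∃ s : S, s ∉ AddSubgroup.closure
          {z : S | ∃ a ∈ I, ∃ w : S, z = ιS (f₀ a) * w})) := by
  classical
  set F : ι → S₀ → S := fun k a => ιS a * φ (e k) with hFdef
  have hF0 : ∀ k, F k 0 = 0 := by intro k; simp [F]
  have hFadd : ∀ k a b, F k (a + b) = F k a + F k b := by
    intro k a b; simp [F, add_mul]
  have hΦadd : ∀ c c' : ι →₀ S₀, (c + c').sum F = c.sum F + c'.sum F :=
    fun c c' => Finsupp.sum_add_index' hF0 hFadd
  have hΦsub : ∀ c c' : ι →₀ S₀, (c - c').sum F = c.sum F - c'.sum F := by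
    intro c c'
    apply Finsupp.sum_sub_index
    intro k a b; simp [F, sub_mul]
  have hφe : ∀ k, φ (e k) ∈ FS (dg k) := fun k => hφ _ _ (he k)
  have hι0 : ∀ a : S₀, ιS a ∈ FS 0 := fun a => (hιSrange _).mpr ⟨a, rfl⟩
  have hterm : ∀ (k) (a : S₀) (N : ℕ), dg k ≤ N → F k a ∈ FS N := by
    intro k a N hk
    have h := hSmul 0 (dg k) _ (hι0 a) _ (hφe k)
    rw [zero_add] at h
    exact hSmono hk h
  have hmem : ∀ (c : ι →₀ S₀) (N : ℕ), (∀ k ∈ c.support, dg k ≤ N) →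
      c.sum F ∈ FS N := by
    intro c N hc
    rw [Finsupp.sum]
    exact AddSubgroup.sum_mem _ fun k hk => hterm k _ N (hc k hk)
  -- uniqueness core
  have hzero : ∀ (N : ℕ) (c : ι →₀ S₀), (∀ k ∈ c.support, dg k ≤ N) →
      c.sum F = 0 → c = 0 := by
    intro N
    induction N with
    | zero =>
      intro c hc h
      exact hindS0 c (fun k hk => Nat.le_zero.mp (hc k hk)) h
    | succ N ih =>
      intro c hc h
      have hsplit : c.filter (fun k => dg k = N + 1)
          + c.filter (fun k => ¬ dg k = N + 1) = c :=
        Finsupp.filter_pos_add_filter_neg c _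
      set c₁ : ι →₀ S₀ := c.filter (fun k => dg k = N + 1) with hc₁def
      set c₂ : ι →₀ S₀ := c.filter (fun k => ¬ dg k = N + 1) with hc₂def
      have hsupp₂ : ∀ k ∈ c₂.support, dg k ≤ N := by
        intro k hk
        rw [hc₂def, Finsupp.support_filter, Finset.mem_filter] at hk
        have := hc k hk.1
        omega
      have h₂mem : c₂.sum F ∈ FS N := hmem c₂ N hsupp₂
      have h₁mem : c₁.sum F ∈ FS N := by
        have : c₁.sum F + c₂.sum F = 0 := by rw [← hΦadd, hsplit, h]
        have h1 : c₁.sum F = -(c₂.sum F) := by linear_combination (norm := abel) this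
        rw [h1]; exact neg_mem h₂mem
      have hc₁0 : c₁ = 0 := by
        apply hindS N c₁ _ h₁mem
        intro k hk
        rw [hc₁def, Finsupp.support_filter, Finset.mem_filter] at hk
        exact hk.2
      have hc₂0 : c₂ = 0 := by
        apply ih c₂ hsupp₂
        rw [← hsplit, hΦadd, hc₁0] at h
        simpa using h
      rw [← hsplit, hc₁0, hc₂0, add_zero]
  have huniq : ∀ c c' : ι →₀ S₀, c.sum F = c'.sum F → c = c' := by
    intro c c' h
    have hd : (c - c').sum F = 0 := by rw [hΦsub, h, sub_self]
    have := hzero ((c - c').support.sup dg) (c - c')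
      (fun k hk => Finset.le_sup hk) hd
    exact sub_eq_zero.mp this
  -- bounded existence
  have hexist : ∀ i : ℕ, ∀ y ∈ FS i, ∃ c : ι →₀ S₀,
      (∀ k ∈ c.support, dg k ≤ i) ∧ y = c.sum F := by
    intro i
    induction i with
    | zero =>
      intro y hy
      obtain ⟨c, hc, hsum⟩ := hexS0 y hy
      exact ⟨c, fun k hk => (hc k hk).le, hsum⟩
    | succ d ih =>
      intro y hy
      obtain ⟨c₁, hc₁, hrem⟩ := hexS d y hy
      obtain ⟨c₂, hc₂, hsum₂⟩ := ih _ hrem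
      refine ⟨c₁ + c₂, ?_, ?_⟩
      · intro k hk
        rcases Finset.mem_union.mp (Finsupp.support_add hk) with hk | hk
        · exact (hc₁ k hk).le
        · exact (hc₂ k hk).trans (Nat.le_succ d)
      · rw [hΦadd, ← hsum₂]; abel
  have hexistAll : ∀ y : S, ∃ c : ι →₀ S₀, y = c.sum F := by
    intro y
    obtain ⟨i, hi⟩ := hSexh y
    obtain ⟨c, -, h⟩ := hexist i y hi
    exact ⟨c, h⟩
  have hsmul : ∀ (s : S₀) (c : ι →₀ S₀), (s • c).sum F = ιS s * c.sum F := by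
    intro s c
    rw [Finsupp.sum_smul_index' hF0, Finsupp.mul_sum]
    apply Finsupp.sum_congr
    intro k _
    simp [F, map_mul, mul_assoc]
  refine ⟨⟨hexistAll, huniq, hexist⟩, ?_, ?_⟩
  · -- flatness
    intro Hf n a x hx
    choose c hc using fun i => hexistAll (x i)
    set C : ι →₀ S₀ := ∑ i, f₀ (a i) • c i with hCdef
    have hCsum : C.sum F = 0 := by
      rw [hCdef, ← Finsupp.sum_finsetSum_index hF0 hFadd]
      calc ∑ i, (f₀ (a i) • c i).sum F = ∑ i, ιS (f₀ (a i)) * x i := by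
            refine Finset.sum_congr rfl fun i _ => ?_
            rw [hsmul, ← hc i]
        _ = 0 := hx
    have hC0 : C = 0 := huniq C 0 (by rw [hCsum, Finsupp.sum_zero_index])
    have hCk : ∀ k : ι, ∑ i, f₀ (a i) * c i k = 0 := by
      intro k
      have h := congrArg (fun g : ι →₀ S₀ => g k) hC0
      simpa [hCdef, Finset.sum_apply', Finsupp.smul_apply, smul_eq_mul] using h
    have H : ∀ k : ι, ∃ m : ℕ, ∃ b : Fin n → Fin m → R₀, ∃ y : Fin m → S₀,
        (∀ i, c i k = ∑ j, f₀ (b i j) * y j) ∧ (∀ j, ∑ i, a i * b i j = 0) :=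
      fun k => Hf n a (fun i => c i k) (hCk k)
    choose m b y hb hy using H
    set K : Finset ι := Finset.univ.biUnion (fun i : Fin n => (c i).support)
      with hKdef
    let T := Σ k : K, Fin (m k.1)
    let eqv : T ≃ Fin (Fintype.card T) := Fintype.equivFin T
    refine ⟨Fintype.card T,
      fun i j => b (eqv.symm j).1 i (eqv.symm j).2,
      fun j => ιS (y (eqv.symm j).1 (eqv.symm j).2) * φ (e (eqv.symm j).1),
      ?_, ?_⟩
    · intro i
      have step1 : ∑ j : Fin (Fintype.card T),
          ιS (f₀ (b (eqv.symm j).1 i (eqv.symm j).2)) *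
            (ιS (y (eqv.symm j).1 (eqv.symm j).2) * φ (e (eqv.symm j).1))
          = ∑ t : T, ιS (f₀ (b t.1 i t.2)) * (ιS (y t.1 t.2) * φ (e t.1)) :=
        Equiv.sum_comp eqv.symm
          (fun t : T => ιS (f₀ (b t.1 i t.2)) * (ιS (y t.1 t.2) * φ (e t.1)))
      have step2 : ∑ t : T, ιS (f₀ (b t.1 i t.2)) * (ιS (y t.1 t.2) * φ (e t.1))
          = ∑ k : K, ∑ jj : Fin (m k.1),
              ιS (f₀ (b k.1 i jj)) * (ιS (y k.1 jj) * φ (e k.1)) := by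
        exact Finset.sum_sigma Finset.univ (fun _ => Finset.univ) _
      have step3 : ∀ k : K, ∑ jj : Fin (m k.1),
          ιS (f₀ (b k.1 i jj)) * (ιS (y k.1 jj) * φ (e k.1))
          = ιS (c i k.1) * φ (e k.1) := by
        intro k
        rw [hb k.1 i]
        rw [map_sum, Finset.sum_mul]
        refine Finset.sum_congr rfl fun jj _ => ?_
        rw [map_mul, mul_assoc]
      have step4 : ∑ k : K, ιS (c i k.1) * φ (e k.1)
          = ∑ k ∈ K, ιS (c i k) * φ (e k) :=
        Finset.sum_coe_sort K (fun k => ιS (c i k) * φ (e k))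
      have step5 : ∑ k ∈ K, ιS (c i k) * φ (e k) = (c i).sum F := by
        rw [Finsupp.sum]
        apply (Finset.sum_subset ?_ ?_).symm
        · intro k hk
          exact Finset.mem_biUnion.mpr ⟨i, Finset.mem_univ i, hk⟩
        · intro k _ hk
          rw [Finsupp.notMem_support_iff.mp hk]
          simp
      rw [step1, step2]
      calc x i = (c i).sum F := hc i
        _ = ∑ k : K, ιS (c i k.1) * φ (e k.1) := by rw [step4, step5]
        _ = _ := by
            refine Finset.sum_congr rfl fun k _ => ?_
            exact (step3 k).symm
    · intro j
      exact hy (eqv.symm j).1 (eqv.symm j).2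
  · -- faithful flatness
    rintro ⟨-, Hmax⟩ I hI
    obtain ⟨s₀, hs₀⟩ := Hmax I hI
    set M₀ : AddSubgroup S₀ :=
      AddSubgroup.closure {z : S₀ | ∃ a ∈ I, ∃ w : S₀, z = f₀ a * w} with hM₀def
    refine ⟨ιS s₀, fun hmemS => hs₀ ?_⟩
    have hM₀mul : ∀ z ∈ M₀, ∀ t : S₀, z * t ∈ M₀ := by
      intro z hz t
      have hle : M₀ ≤ M₀.comap (AddMonoidHom.mulRight t) := by
        rw [hM₀def]
        apply (AddSubgroup.closure_le _).mpr
        rintro _ ⟨a, ha, w, rfl⟩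
        simp only [Set.mem_preimage, AddSubgroup.coe_comap,
          AddMonoidHom.coe_mulRight]
        rw [mul_assoc]
        exact AddSubgroup.subset_closure ⟨a, ha, w * t, rfl⟩
      exact hle hz
    -- the subgroup of S of elements whose coefficients lie in M₀
    set NS : AddSubgroup S :=
      { carrier := {z : S | ∃ c : ι →₀ S₀, (∀ k, c k ∈ M₀) ∧ z = c.sum F}
        add_mem' := by
          rintro z z' ⟨c, hcm, rfl⟩ ⟨c', hcm', rfl⟩
          exact ⟨c + c', fun k => add_mem (hcm k) (hcm' k), (hΦadd c c').symm⟩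
        zero_mem' := ⟨0, fun k => zero_mem _, (Finsupp.sum_zero_index).symm⟩
        neg_mem' := by
          rintro z ⟨c, hcm, rfl⟩
          refine ⟨-c, fun k => by simpa using neg_mem (hcm k), ?_⟩
          have : (0 - c).sum F = (0 : ι →₀ S₀).sum F - c.sum F := hΦsub 0 c
          rw [zero_sub] at this
          rw [this, Finsupp.sum_zero_index, zero_sub] } with hNSdef
    have hleNS : AddSubgroup.closure
        {z : S | ∃ a ∈ I, ∃ w : S, z = ιS (f₀ a) * w} ≤ NS := by
      apply (AddSubgroup.closure_le _).mpr
      rintro _ ⟨a, ha, w, rfl⟩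
      obtain ⟨c, rfl⟩ := hexistAll w
      refine ⟨f₀ a • c, fun k => ?_, (hsmul _ _).symm⟩
      rw [Finsupp.smul_apply, smul_eq_mul]
      exact AddSubgroup.subset_closure ⟨a, ha, c k, rfl⟩
    obtain ⟨c, hcm, hrep⟩ := hleNS hmemS
    -- the canonical degree-zero representation
    obtain ⟨c', hc', hrep'⟩ := hexist 0 (ιS s₀) (hι0 s₀)
    have hcc' : c = c' := huniq c c' (by rw [← hrep, ← hrep'])
    have hdeg0 : ∀ k ∈ c.support, dg k = 0 := by
      intro k hk
      rw [hcc'] at hk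
      exact Nat.le_zero.mp (hc' k hk)
    have hε : ∀ k : ι, ∃ t : S₀, dg k = 0 → ιS t = φ (e k) := by
      intro k
      by_cases h : dg k = 0
      · obtain ⟨t, ht⟩ := (hιSrange (φ (e k))).mp (by
          have := hφe k; rwa [h] at this)
        exact ⟨t, fun _ => ht⟩
      · exact ⟨0, fun h' => absurd h' h⟩
    choose ε hε using hε
    have key : ιS s₀ = ιS (c.sum fun k a => a * ε k) := by
      rw [hrep, Finsupp.sum, Finsupp.sum, map_sum]
      refine Finset.sum_congr rfl fun k hk => ?_
      rw [map_mul, hε k (hdeg0 k hk)]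
    have hs₀eq : s₀ = c.sum fun k a => a * ε k := hιS key
    rw [hs₀eq, Finsupp.sum]
    exact AddSubgroup.sum_mem _ fun k _ => hM₀mul _ (hcm k) (ε k)
end
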